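/- If (D_λ)_{λ∈Λ} is a family of commutative rings each satisfying property (++), then (U) = {a ∈ R | S(a) ∈ U} is a maximal ideal of R = ∏_{λ∈Λ} D_λ for every ultrafilter U in B. -/

import Mathlib

/-!
Common setup: `Λ` is an index set, `D λ` a family of commutative rings,
`R = ∏ λ, D λ` the product ring, and
`B = ∏ λ, P(max (D λ))` the product Boolean algebra of the power sets of the
sets of maximal ideals, realized as the Pi type `∀ l, Set (MaximalSpectrum (D l))`
with its componentwise Boolean algebra structure (meet = componentwise ∩,
join = componentwise ∪, `⊥ = (∅)_λ`, complement componentwise, order = componentwise ⊆).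
-/

variable {Λ : Type*} {D : Λ → Type*}

/-- `S(a) = (V(a_λ))_λ ∈ B`, where `V(x)` is the set of maximal ideals containing `x`. -/
def SFam [∀ l, CommRing (D l)] (a : ∀ l, D l) : ∀ l, Set (MaximalSpectrum (D l)) :=
  fun l => {P | a l ∈ P.asIdeal}

/-- `z(x) = {λ | x_λ = 0}`. -/
def ZFam [∀ l, CommRing (D l)] (x : ∀ l, D l) : Set Λ := {l | x l = 0}

/-- A filter in a Boolean algebra: a nonempty subset not containing `⊥`, closed
under meets, and upward closed. -/
def IsBFilter {B : Type*} [BooleanAlgebra B] (U : Set B) : Prop :=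
  U.Nonempty ∧ ⊥ ∉ U ∧ (∀ X ∈ U, ∀ Y ∈ U, X ⊓ Y ∈ U) ∧ (∀ Y ∈ U, ∀ Z, Y ≤ Z → Z ∈ U)

/-- An ultrafilter in a Boolean algebra: a filter containing `Y` or `Yᶜ` for every `Y`. -/
def IsBUltrafilter {B : Type*} [BooleanAlgebra B] (U : Set B) : Prop :=
  IsBFilter U ∧ ∀ Y, Y ∈ U ∨ Yᶜ ∈ U

/-- Property (+): for all `r` and all nonzero `a` there is `d` lying in every maximal
ideal containing `a` but not `r`, and in no maximal ideal containing `r`. -/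
def PropertyPlus (A : Type*) [CommRing A] : Prop :=
  ∀ r a : A, a ≠ 0 → ∃ d : A,
    (∀ M : Ideal A, M.IsMaximal → a ∈ M → r ∉ M → d ∈ M) ∧
    (∀ M : Ideal A, M.IsMaximal → r ∈ M → d ∉ M)

/-- Property (++): for every `r` there is `d` with `D(r) = V(d)`, i.e. the maximal
ideals containing `d` are exactly those not containing `r`. -/
def PropertyPlusPlus (A : Type*) [CommRing A] : Prop :=
  ∀ r : A, ∃ d : A, ∀ P : MaximalSpectrum A, d ∈ P.asIdeal ↔ r ∉ P.asIdeal

/-- If every `D l` satisfies property (++), then `(U)` is a maximal ideal of `R` for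
every ultrafilter `U` in `B`. -/
theorem stmt_11 [∀ l, CommRing (D l)] [∀ l, Nontrivial (D l)]
    (hpp : ∀ l, PropertyPlusPlus (D l))
    (U : Set (∀ l, Set (MaximalSpectrum (D l)))) (hU : IsBUltrafilter U) :
    ∃ I : Ideal (∀ l, D l), (∀ r, r ∈ I ↔ SFam r ∈ U) ∧ I.IsMaximal := by
  obtain ⟨⟨⟨Y0, hY0⟩, hbot, hmeet, hup⟩, hult⟩ := hU
  have htop : (⊤ : ∀ l, Set (MaximalSpectrum (D l))) ∈ U := hup Y0 hY0 ⊤ le_top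
  -- the ideal
  refine ⟨{
    carrier := {a | SFam a ∈ U}
    add_mem' := ?_
    zero_mem' := ?_
    smul_mem' := ?_ }, ?_, ?_⟩
  · intro a b ha hb
    refine hup _ (hmeet _ ha _ hb) _ ?_
    intro l P hP
    exact P.asIdeal.add_mem hP.1 hP.2
  · have : SFam (0 : ∀ l, D l) = ⊤ := by
      funext l; ext P; simp [SFam]
    simpa [Set.mem_setOf_eq, this] using htop
  · intro r a ha
    refine hup _ ha _ ?_
    intro l P hP
    exact P.asIdeal.mul_mem_left (r l) hP
  · intro r; rfl
  · rw [Ideal.isMaximal_iff]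
    constructor
    · show SFam (1 : ∀ l, D l) ∉ U
      have : SFam (1 : ∀ l, D l) = ⊥ := by
        funext l; ext P
        simp only [SFam, Set.mem_setOf_eq]
        constructor
        · intro h; exact P.2.ne_top (P.asIdeal.eq_top_of_isUnit_mem h isUnit_one)
        · intro h; exact h.elim
      rw [this]; exact hbot
    · intro J b hIJ hbI hbJ
      -- pick d with SFam d = (SFam b)ᶜ
      set d : ∀ l, D l := fun l => (hpp l (b l)).choose with hd
      have hdspec : ∀ l (P : MaximalSpectrum (D l)), d l ∈ P.asIdeal ↔ b l ∉ P.asIdeal :=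
        fun l => (hpp l (b l)).choose_spec
      have hSd : SFam d = (SFam b)ᶜ := by
        funext l; ext P
        simp only [SFam, Set.mem_setOf_eq, Pi.compl_apply, Set.mem_compl_iff]
        exact hdspec l P
      have hdI : SFam d ∈ U := by
        rw [hSd]
        rcases hult (SFam b) with h | h
        · exact absurd h hbI
        · exact h
      have hdJ : d ∈ J := hIJ hdI
      have hcJ : b + d ∈ J := J.add_mem hbJ hdJ
      have hcomp : ∀ l, IsUnit ((b + d) l) := by
        intro l
        rw [← Ideal.span_singleton_eq_top]
        by_contra hne
        obtain ⟨M, hM, hle⟩ := Ideal.exists_le_maximal _ hne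
        have hmem : b l + d l ∈ M := hle (Ideal.subset_span rfl)
        set P : MaximalSpectrum (D l) := ⟨M, hM⟩
        by_cases hb : b l ∈ P.asIdeal
        · have : d l ∉ P.asIdeal := fun h => ((hdspec l P).mp h) hb
          exact this (by simpa using P.asIdeal.sub_mem hmem hb)
        · have hdP : d l ∈ P.asIdeal := (hdspec l P).mpr hb
          exact hb (by simpa using P.asIdeal.sub_mem hmem hdP)
      have hunit : IsUnit (b + d) :=
        IsUnit.of_mul_eq_one (fun l => ((hcomp l).unit⁻¹ : Units (D l))) <| by
          funext l
          exact (hcomp l).mul_val_inv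
      exact J.eq_top_of_isUnit_mem hcJ hunit ▸ Submodule.mem_top
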